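/- Let σ, γ > 0, t, s ≥ 0 and a > 0. Then ∫_ℝ [1 − 2Φ(−(t + s − 2σ√γ g)/(2a))] · min(1, φ_{σ²γ}(t − σ√γ g)/φ_{σ²γ}(σ√γ g)) φ(g) dg = 2 P(σ√γ G ≥ t/2 and −s − t ≤ 2a G̃ − 2σ√γ G ≤ s − t), where G, G̃ are independent standard one-dimensional Gaussian random variables. -/

import Mathlib

open MeasureTheory ProbabilityTheory
open scoped NNReal ENNReal

/-- Standard Gaussian density. -/
noncomputable def stdG (g : ℝ) : ℝ :=
  (Real.sqrt (2 * Real.pi))⁻¹ * Real.exp (-g ^ 2 / 2)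

/-- Standard Gaussian cumulative distribution function. -/
noncomputable def Phi (x : ℝ) : ℝ := ∫ u in Set.Iio x, stdG u

/-- Density of the one-dimensional centered Gaussian with variance `v`. -/
noncomputable def gpdf (v x : ℝ) : ℝ :=
  (Real.sqrt (2 * Real.pi * v))⁻¹ * Real.exp (-x ^ 2 / (2 * v))

open Set

lemma stdG_eq : stdG = gaussianPDFReal 0 1 := by
  ext x; simp [stdG, gaussianPDFReal]

lemma stdG_nonneg (x : ℝ) : 0 ≤ stdG x := by unfold stdG; positivity

lemma measurable_stdG : Measurable stdG := by unfold stdG; fun_prop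

lemma integrable_stdG : Integrable stdG := stdG_eq ▸ integrable_gaussianPDFReal 0 1

lemma integral_stdG : ∫ x, stdG x = 1 := by
  rw [stdG_eq]; exact integral_gaussianPDFReal_eq_one 0 one_ne_zero

lemma stdG_neg (x : ℝ) : stdG (-x) = stdG x := by simp [stdG]

lemma Phi_mono : Monotone Phi := fun x y h =>
  setIntegral_mono_set integrable_stdG.integrableOn (ae_of_all _ stdG_nonneg)
    (HasSubset.Subset.eventuallyLE (Iio_subset_Iio h))

lemma measurable_Phi : Measurable Phi := Phi_mono.measurable

lemma Phi_nonneg (x : ℝ) : 0 ≤ Phi x :=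
  setIntegral_nonneg measurableSet_Iio (fun u _ => stdG_nonneg u)

lemma Phi_le_one (x : ℝ) : Phi x ≤ 1 := by
  rw [← integral_stdG]
  exact setIntegral_le_integral integrable_stdG (ae_of_all _ stdG_nonneg)

lemma Phi_eq_Iic (x : ℝ) : Phi x = ∫ u in Iic x, stdG u :=
  (integral_Iic_eq_integral_Iio).symm

lemma Phi_neg (x : ℝ) : Phi (-x) = 1 - Phi x := by
  have h1 : Phi (-x) = ∫ u in Ioi x, stdG u := by
    have := integral_comp_neg_Iic (-x) stdG
    simp only [stdG_neg, neg_neg] at this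
    rw [Phi_eq_Iic, this]
  have h2 : Phi x + ∫ u in Ioi x, stdG u = 1 := by
    rw [Phi_eq_Iic, intervalIntegral.integral_Iic_add_Ioi integrable_stdG.integrableOn
      integrable_stdG.integrableOn, integral_stdG]
  linarith

lemma Phi_diff {z w : ℝ} (h : z ≤ w) : ∫ u in Icc z w, stdG u = Phi w - Phi z := by
  have hu : Iio z ∪ Ico z w = Iio w := Iio_union_Ico_eq_Iio h
  have hsplit : Phi w = Phi z + ∫ u in Ico z w, stdG u := by
    rw [Phi, Phi, ← hu, setIntegral_union ((Iio_disjoint_Ici le_rfl).mono_right Ico_subset_Ici_self)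
      measurableSet_Ico integrable_stdG.integrableOn integrable_stdG.integrableOn]
  rw [integral_Icc_eq_integral_Ico]
  linarith

lemma gaussianReal_Icc {z w : ℝ} (h : z ≤ w) :
    gaussianReal 0 1 (Icc z w) = ENNReal.ofReal (Phi w - Phi z) := by
  rw [gaussianReal_apply_eq_integral 0 one_ne_zero, ← stdG_eq, Phi_diff h]

section aux
variable {c t s a : ℝ}

lemma measurable_A (c t : ℝ) : MeasurableSet {g : ℝ | t / 2 ≤ c * g} :=
  (measurable_id.const_mul c) measurableSet_Ici

lemma measurable_F (c t s a : ℝ) :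
    Measurable (fun g : ℝ => Phi ((2 * c * g + s - t) / (2 * a))
      - Phi ((2 * c * g - s - t) / (2 * a))) := by
  apply Measurable.sub <;> exact measurable_Phi.comp (by fun_prop)

lemma div_le_div_same' {x y d : ℝ} (h : x ≤ y) (hd : 0 < d) : x / d ≤ y / d := by gcongr

lemma lu_le (hs : 0 ≤ s) (ha : 0 < a) (c t : ℝ) (g : ℝ) :
    (2 * c * g - s - t) / (2 * a) ≤ (2 * c * g + s - t) / (2 * a) :=
  div_le_div_same' (by linarith) (by linarith)

lemma F_nonneg (hs : 0 ≤ s) (ha : 0 < a) (g : ℝ) :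
    0 ≤ Phi ((2 * c * g + s - t) / (2 * a)) - Phi ((2 * c * g - s - t) / (2 * a)) := by
  linarith [Phi_mono (lu_le hs ha c t g)]

lemma F_le_one (g : ℝ) :
    Phi ((2 * c * g + s - t) / (2 * a)) - Phi ((2 * c * g - s - t) / (2 * a)) ≤ 1 := by
  linarith [Phi_le_one ((2 * c * g + s - t) / (2 * a)),
    Phi_nonneg ((2 * c * g - s - t) / (2 * a))]

lemma integrable_indfstd (hs : 0 ≤ s) (ha : 0 < a) :
    Integrable (Set.indicator {g : ℝ | t / 2 ≤ c * g}
      (fun g => (Phi ((2 * c * g + s - t) / (2 * a))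
        - Phi ((2 * c * g - s - t) / (2 * a))) * stdG g)) := by
  refine Integrable.mono integrable_stdG ?_ (ae_of_all _ fun g => ?_)
  · exact (((measurable_F c t s a).mul measurable_stdG).indicator
      (measurable_A c t)).aestronglyMeasurable
  · rw [Real.norm_eq_abs, Real.norm_eq_abs, abs_of_nonneg (stdG_nonneg g)]
    by_cases hg : g ∈ {g : ℝ | t / 2 ≤ c * g}
    · rw [Set.indicator_of_mem hg, abs_of_nonneg (mul_nonneg (F_nonneg hs ha g) (stdG_nonneg g))]
      calc _ ≤ 1 * stdG g := by
              exact mul_le_mul_of_nonneg_right (F_le_one g) (stdG_nonneg g)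
        _ = stdG g := one_mul _
    · rw [Set.indicator_of_notMem hg]; simp [stdG_nonneg g]

lemma rhs_aux (hs : 0 ≤ s) (ha : 0 < a) :
    ((gaussianReal 0 1).prod (gaussianReal 0 1))
        {p : ℝ × ℝ | t / 2 ≤ c * p.1 ∧
          -s - t ≤ 2 * a * p.2 - 2 * c * p.1 ∧ 2 * a * p.2 - 2 * c * p.1 ≤ s - t}
      = ENNReal.ofReal (∫ g, Set.indicator {g : ℝ | t / 2 ≤ c * g}
          (fun g => (Phi ((2 * c * g + s - t) / (2 * a))
            - Phi ((2 * c * g - s - t) / (2 * a))) * stdG g) g) := by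
  set A := {g : ℝ | t / 2 ≤ c * g} with hA
  have h2a : (0:ℝ) < 2 * a := by linarith
  have hS : MeasurableSet {p : ℝ × ℝ | t / 2 ≤ c * p.1 ∧
      -s - t ≤ 2 * a * p.2 - 2 * c * p.1 ∧ 2 * a * p.2 - 2 * c * p.1 ≤ s - t} := by
    simp only [Set.setOf_and]
    refine MeasurableSet.inter ?_ (MeasurableSet.inter ?_ ?_) <;>
      exact measurableSet_le (by fun_prop) (by fun_prop)
  rw [Measure.prod_apply hS]
  have hslice : ∀ g : ℝ, gaussianReal 0 1 (Prod.mk g ⁻¹' {p : ℝ × ℝ | t / 2 ≤ c * p.1 ∧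
      -s - t ≤ 2 * a * p.2 - 2 * c * p.1 ∧ 2 * a * p.2 - 2 * c * p.1 ≤ s - t})
      = Set.indicator A (fun g => ENNReal.ofReal (Phi ((2 * c * g + s - t) / (2 * a))
          - Phi ((2 * c * g - s - t) / (2 * a)))) g := by
    intro g
    by_cases hg : g ∈ A
    · have hpre : Prod.mk g ⁻¹' {p : ℝ × ℝ | t / 2 ≤ c * p.1 ∧
          -s - t ≤ 2 * a * p.2 - 2 * c * p.1 ∧ 2 * a * p.2 - 2 * c * p.1 ≤ s - t}
          = Icc ((2 * c * g - s - t) / (2 * a)) ((2 * c * g + s - t) / (2 * a)) := by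
        ext h
        have hg' : t / 2 ≤ c * g := hg
        simp only [mem_preimage, mem_setOf_eq, mem_Icc, div_le_iff₀ h2a, le_div_iff₀ h2a]
        constructor
        · rintro ⟨-, h1, h2⟩; constructor <;> linarith
        · rintro ⟨h1, h2⟩; exact ⟨hg', by linarith, by linarith⟩
      rw [hpre, gaussianReal_Icc (lu_le hs ha c t g),
        Set.indicator_of_mem hg]
    · have hpre : Prod.mk g ⁻¹' {p : ℝ × ℝ | t / 2 ≤ c * p.1 ∧
          -s - t ≤ 2 * a * p.2 - 2 * c * p.1 ∧ 2 * a * p.2 - 2 * c * p.1 ≤ s - t} = ∅ := by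
        ext h; simp only [mem_preimage, mem_setOf_eq, mem_empty_iff_false, iff_false]
        exact fun hh => hg hh.1
      rw [hpre, measure_empty, Set.indicator_of_notMem hg]
  rw [lintegral_congr hslice]
  rw [gaussianReal_of_var_ne_zero 0 one_ne_zero,
    lintegral_withDensity_eq_lintegral_mul _ (measurable_gaussianPDF 0 1)
      (((measurable_F c t s a).ennreal_ofReal).indicator (measurable_A c t))]
  have hpt : ∀ g : ℝ, (gaussianPDF 0 1 * Set.indicator A
      (fun g => ENNReal.ofReal (Phi ((2 * c * g + s - t) / (2 * a))
        - Phi ((2 * c * g - s - t) / (2 * a))))) g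
      = ENNReal.ofReal (Set.indicator A (fun g => (Phi ((2 * c * g + s - t) / (2 * a))
          - Phi ((2 * c * g - s - t) / (2 * a))) * stdG g) g) := by
    intro g
    by_cases hg : g ∈ A
    · rw [Pi.mul_apply, Set.indicator_of_mem hg, Set.indicator_of_mem hg, gaussianPDF,
        ← stdG_eq, ← ENNReal.ofReal_mul (stdG_nonneg g), mul_comm (stdG g)]
    · rw [Pi.mul_apply, Set.indicator_of_notMem hg, Set.indicator_of_notMem hg]
      simp
  rw [lintegral_congr hpt,
    ← ofReal_integral_eq_lintegral_ofReal (integrable_indfstd hs ha)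
      (ae_of_all _ fun g => Set.indicator_nonneg
        (fun g _ => mul_nonneg (F_nonneg hs ha g) (stdG_nonneg g)) g)]

end aux

lemma gpdf_ratio {v : ℝ} (hv : 0 < v) (x y : ℝ) :
    gpdf v x / gpdf v y = Real.exp ((y ^ 2 - x ^ 2) / (2 * v)) := by
  unfold gpdf
  rw [mul_div_mul_left _ _ (inv_ne_zero (by positivity)), ← Real.exp_sub]
  congr 1
  field_simp
  ring

lemma exp_mul_stdG {c : ℝ} (hc : c ≠ 0) (t g : ℝ) :
    Real.exp ((2 * t * (c * g) - t ^ 2) / (2 * c ^ 2)) * stdG g = stdG (g - t / c) := by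
  unfold stdG
  rw [mul_left_comm, ← Real.exp_add]
  congr 2
  field_simp
  ring

lemma min_ratio {c : ℝ} (hc : 0 < c) (ht : 0 ≤ t) (g : ℝ) :
    min 1 (gpdf (c ^ 2) (t - c * g) / gpdf (c ^ 2) (c * g))
      = if t / 2 ≤ c * g then 1 else Real.exp ((2 * t * (c * g) - t ^ 2) / (2 * c ^ 2)) := by
  rw [gpdf_ratio (by positivity)]
  have harg : ((c * g) ^ 2 - (t - c * g) ^ 2) / (2 * c ^ 2)
      = (2 * t * (c * g) - t ^ 2) / (2 * c ^ 2) := by ring_nf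
  rw [harg]
  split_ifs with h
  · exact min_eq_left (Real.one_le_exp (div_nonneg (by nlinarith) (by positivity)))
  · exact min_eq_right (Real.exp_le_one_iff.mpr
      (div_nonpos_of_nonpos_of_nonneg (by nlinarith) (by positivity)))

theorem main_aux (c t s a : ℝ) (hc : 0 < c) (ht : 0 ≤ t) (hs : 0 ≤ s) (ha : 0 < a) :
    ∫ g : ℝ,
      (1 - 2 * Phi (-(t + s - 2 * c * g) / (2 * a))) *
        min 1 (gpdf (c ^ 2) (t - c * g) / gpdf (c ^ 2) (c * g)) * stdG g
      = 2 * (((gaussianReal 0 1).prod (gaussianReal 0 1))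
          {p : ℝ × ℝ | t / 2 ≤ c * p.1 ∧
            -s - t ≤ 2 * a * p.2 - 2 * c * p.1 ∧
            2 * a * p.2 - 2 * c * p.1 ≤ s - t}).toReal := by
  set A := {g : ℝ | t / 2 ≤ c * g} with hAdef
  have hAmeas : MeasurableSet A := measurable_A c t
  -- the target common integrand
  set F : ℝ → ℝ := fun g => Phi ((2 * c * g + s - t) / (2 * a))
      - Phi ((2 * c * g - s - t) / (2 * a)) with hFdef
  set J : ℝ := ∫ g, Set.indicator A (fun g => F g * stdG g) g with hJdef
  have hJnonneg : 0 ≤ J := by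
    refine integral_nonneg fun g => Set.indicator_nonneg (fun g _ => ?_) g
    exact mul_nonneg (F_nonneg hs ha g) (stdG_nonneg g)
  -- RHS
  have hRHS : (((gaussianReal 0 1).prod (gaussianReal 0 1))
      {p : ℝ × ℝ | t / 2 ≤ c * p.1 ∧
        -s - t ≤ 2 * a * p.2 - 2 * c * p.1 ∧
        2 * a * p.2 - 2 * c * p.1 ≤ s - t}).toReal = J := by
    rw [rhs_aux hs ha, ENNReal.toReal_ofReal hJnonneg]
  rw [hRHS]
  -- LHS decomposition
  set f₁ : ℝ → ℝ := Set.indicator A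
      (fun g => (1 - 2 * Phi (-(t + s - 2 * c * g) / (2 * a))) * stdG g) with hf₁
  set f₂ : ℝ → ℝ := Set.indicator Aᶜ
      (fun g => (1 - 2 * Phi (-(t + s - 2 * c * g) / (2 * a))) * stdG (g - t / c)) with hf₂
  have hmeas1 : Measurable fun g : ℝ =>
      (1 - 2 * Phi (-(t + s - 2 * c * g) / (2 * a))) * stdG g := by
    exact ((measurable_const.sub ((measurable_Phi.comp (by fun_prop)).const_mul 2)).mul
      measurable_stdG)
  have hmeas2 : Measurable fun g : ℝ =>
      (1 - 2 * Phi (-(t + s - 2 * c * g) / (2 * a))) * stdG (g - t / c) := by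
    exact ((measurable_const.sub ((measurable_Phi.comp (by fun_prop)).const_mul 2)).mul
      (measurable_stdG.comp (by fun_prop)))
  have habs : ∀ x : ℝ, |1 - 2 * Phi x| ≤ 1 := by
    intro x
    rw [abs_le]
    constructor <;> nlinarith [Phi_nonneg x, Phi_le_one x]
  have hint1 : Integrable f₁ := by
    refine Integrable.mono integrable_stdG
      ((hmeas1.indicator hAmeas).aestronglyMeasurable) (ae_of_all _ fun g => ?_)
    rw [Real.norm_eq_abs, Real.norm_eq_abs, abs_of_nonneg (stdG_nonneg g)]
    by_cases hg : g ∈ A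
    · rw [hf₁, Set.indicator_of_mem hg, abs_mul, abs_of_nonneg (stdG_nonneg g)]
      exact (mul_le_mul_of_nonneg_right (habs _) (stdG_nonneg g)).trans_eq (one_mul _)
    · rw [hf₁, Set.indicator_of_notMem hg]; simp [stdG_nonneg g]
  have hint2 : Integrable f₂ := by
    refine Integrable.mono (integrable_stdG.comp_sub_right (t / c))
      ((hmeas2.indicator hAmeas.compl).aestronglyMeasurable) (ae_of_all _ fun g => ?_)
    rw [Real.norm_eq_abs, Real.norm_eq_abs, abs_of_nonneg (stdG_nonneg _)]
    by_cases hg : g ∈ Aᶜ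
    · rw [hf₂, Set.indicator_of_mem hg, abs_mul, abs_of_nonneg (stdG_nonneg _)]
      exact (mul_le_mul_of_nonneg_right (habs _) (stdG_nonneg _)).trans_eq (one_mul _)
    · rw [hf₂, Set.indicator_of_notMem hg]; simp [stdG_nonneg]
  have hdecomp : ∀ g : ℝ,
      (1 - 2 * Phi (-(t + s - 2 * c * g) / (2 * a))) *
        min 1 (gpdf (c ^ 2) (t - c * g) / gpdf (c ^ 2) (c * g)) * stdG g
        = f₁ g + f₂ g := by
    intro g
    rw [min_ratio hc ht g]
    by_cases hg : g ∈ A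
    · have hg' : t / 2 ≤ c * g := hg
      rw [if_pos hg', hf₁, hf₂, Set.indicator_of_mem hg,
        Set.indicator_of_notMem (by simpa using hg), mul_one, add_zero]
    · have hg' : ¬ t / 2 ≤ c * g := hg
      rw [if_neg hg', hf₁, hf₂, Set.indicator_of_notMem hg,
        Set.indicator_of_mem (by simpa using hg), zero_add, mul_assoc,
        exp_mul_stdG hc.ne' t g]
  rw [integral_congr_ae (ae_of_all _ hdecomp), integral_add hint1 hint2]
  -- change of variables in the second integral
  have hcv : ∫ g, f₂ g = ∫ y, f₂ (t / c - y) := by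
    calc ∫ g, f₂ g = ∫ y, f₂ (t / c + y) := (integral_add_left_eq_self f₂ (t / c)).symm
      _ = ∫ y, f₂ (t / c + -y) := (integral_neg_eq_self _ _).symm
      _ = ∫ y, f₂ (t / c - y) := by simp_rw [← sub_eq_add_neg]
  have hf₂' : ∀ y : ℝ, f₂ (t / c - y)
      = Set.indicator {y : ℝ | t / 2 < c * y}
          (fun y => (1 - 2 * Phi (-((2 * c * y + s - t) / (2 * a)))) * stdG y) y := by
    intro y
    have hval : c * (t / c - y) = t - c * y := by field_simp
    have hmem : (t / c - y ∈ Aᶜ) ↔ t / 2 < c * y := by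
      simp only [hAdef, mem_compl_iff, mem_setOf_eq, hval, not_le]
      constructor <;> intro h <;> linarith
    have harg : -(t + s - 2 * c * (t / c - y)) / (2 * a)
        = -((2 * c * y + s - t) / (2 * a)) := by
      rw [neg_div]
      congr 1
      have : 2 * c * (t / c - y) = 2 * t - 2 * c * y := by field_simp
      rw [this]; ring
    by_cases hy : t / 2 < c * y
    · rw [hf₂, Set.indicator_of_mem (hmem.mpr hy), Set.indicator_of_mem (show y ∈ {y : ℝ | t / 2 < c * y} from hy), harg]
      congr 1
      have : t / c - y - t / c = -y := by ring
      rw [this, stdG_neg]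
    · rw [hf₂, Set.indicator_of_notMem (fun h => hy (hmem.mp h)),
        Set.indicator_of_notMem (show y ∉ {y : ℝ | t / 2 < c * y} from hy)]
  rw [hcv, integral_congr_ae (ae_of_all _ hf₂')]
  -- combine the two integrals a.e.
  have hnull : (volume : Measure ℝ) {y : ℝ | c * y = t / 2} = 0 := by
    have hsub : {y : ℝ | c * y = t / 2} ⊆ {t / 2 / c} := by
      intro y hy
      simp only [mem_setOf_eq] at hy
      simp [Set.mem_singleton_iff, eq_div_iff hc.ne', mul_comm, hy]
    exact measure_mono_null hsub (measure_singleton _)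
  have hsum : (∫ g, f₁ g) + ∫ y, Set.indicator {y : ℝ | t / 2 < c * y}
      (fun y => (1 - 2 * Phi (-((2 * c * y + s - t) / (2 * a)))) * stdG y) y
      = ∫ g, (f₁ g + Set.indicator {y : ℝ | t / 2 < c * y}
          (fun y => (1 - 2 * Phi (-((2 * c * y + s - t) / (2 * a)))) * stdG y) g) := by
    refine (integral_add hint1 ?_).symm
    refine Integrable.mono integrable_stdG ((((measurable_const.sub
      ((measurable_Phi.comp (by fun_prop)).const_mul 2)).mul measurable_stdG).indicator
      ((measurable_id.const_mul c) measurableSet_Ioi)).aestronglyMeasurable)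
      (ae_of_all _ fun g => ?_)
    rw [Real.norm_eq_abs, Real.norm_eq_abs, abs_of_nonneg (stdG_nonneg _)]
    by_cases hg : g ∈ {y : ℝ | t / 2 < c * y}
    · rw [Set.indicator_of_mem hg, abs_mul, abs_of_nonneg (stdG_nonneg _)]
      exact (mul_le_mul_of_nonneg_right (habs _) (stdG_nonneg _)).trans_eq (one_mul _)
    · rw [Set.indicator_of_notMem hg]; simp [stdG_nonneg]
  rw [hsum]
  have hfinal : (fun g : ℝ => f₁ g + Set.indicator {y : ℝ | t / 2 < c * y}
      (fun y => (1 - 2 * Phi (-((2 * c * y + s - t) / (2 * a)))) * stdG y) g)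
      =ᵐ[volume] fun g => 2 * Set.indicator A (fun g => F g * stdG g) g := by
    have hU : {y : ℝ | c * y = t / 2}ᶜ ∈ ae (volume : Measure ℝ) := by
      rw [mem_ae_iff, compl_compl]; exact hnull
    refine Filter.eventuallyEq_of_mem hU fun g hg => ?_
    have hgne : c * g ≠ t / 2 := hg
    by_cases hmem : t / 2 ≤ c * g
    · have hlt : t / 2 < c * g := lt_of_le_of_ne hmem (Ne.symm hgne)
      have hgA : g ∈ A := hmem
      rw [hf₁, Set.indicator_of_mem hgA, Set.indicator_of_mem (show g ∈ {y : ℝ | t / 2 < c * y} from hlt),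
        Set.indicator_of_mem hgA]
      have e1 : -(t + s - 2 * c * g) / (2 * a) = (2 * c * g - s - t) / (2 * a) := by
        ring_nf
      have e2 : Phi (-((2 * c * g + s - t) / (2 * a)))
          = 1 - Phi ((2 * c * g + s - t) / (2 * a)) := Phi_neg _
      rw [e1, e2, hFdef]
      ring
    · have hgA : g ∉ A := hmem
      have hgB : g ∉ {y : ℝ | t / 2 < c * y} := fun h => hmem (le_of_lt h)
      rw [hf₁, Set.indicator_of_notMem hgA, Set.indicator_of_notMem hgB,
        Set.indicator_of_notMem hgA]
      ring
  rw [integral_congr_ae hfinal, integral_const_mul, ← hJdef]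

theorem sticky_two_gaussian_identity (σ γ t s a : ℝ)
    (hσ : 0 < σ) (hγ : 0 < γ) (ht : 0 ≤ t) (hs : 0 ≤ s) (ha : 0 < a) :
    ∫ g : ℝ,
      (1 - 2 * Phi (-(t + s - 2 * σ * Real.sqrt γ * g) / (2 * a))) *
        min 1 (gpdf (σ ^ 2 * γ) (t - σ * Real.sqrt γ * g) /
          gpdf (σ ^ 2 * γ) (σ * Real.sqrt γ * g)) * stdG g
      = 2 * (((gaussianReal 0 1).prod (gaussianReal 0 1))
          {p : ℝ × ℝ | t / 2 ≤ σ * Real.sqrt γ * p.1 ∧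
            -s - t ≤ 2 * a * p.2 - 2 * σ * Real.sqrt γ * p.1 ∧
            2 * a * p.2 - 2 * σ * Real.sqrt γ * p.1 ≤ s - t}).toReal := by
  have hc : 0 < σ * Real.sqrt γ := by positivity
  have hv : σ ^ 2 * γ = (σ * Real.sqrt γ) ^ 2 := by
    rw [mul_pow, Real.sq_sqrt hγ.le]
  simp only [show ∀ x : ℝ, 2 * σ * Real.sqrt γ * x = 2 * (σ * Real.sqrt γ) * x
    from fun x => by ring, hv]
  exact main_aux _ t s a hc ht hs ha
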